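/- Let H be a complex Hilbert space and let T be a bounded self-adjoint operator on H such that liminf_{n→∞} ⟨T x_n, x_n⟩ ≥ 0 for every sequence (x_n) of unit vectors in H converging weakly to 0. Then the essential spectrum of T (the spectrum of the coset T + K(H) in the Calkin algebra L(H)/K(H)) is contained in [0,∞). -/

import Mathlib

open Filter Topology

set_option linter.unusedSectionVars false

variable (H : Type*) [NormedAddCommGroup H] [InnerProductSpace ℂ H] [CompleteSpace H]

/-- The closed two-sided ideal of compact operators in `L(H)`. -/
noncomputable def compactIdeal : TwoSidedIdeal (H →L[ℂ] H) :=
  TwoSidedIdeal.mk' {T : H →L[ℂ] H | IsCompactOperator ⇑T}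
    isCompactOperator_zero
    (fun hx hy => hx.add hy)
    (fun hx => hx.neg)
    (fun {x y} hy => by
      have : IsCompactOperator (⇑x ∘ ⇑y) := hy.continuous_comp x.continuous
      simpa [Function.comp] using this)
    (fun {x y} hx => by
      have : IsCompactOperator (⇑x ∘ ⇑y) := hx.comp_clm y
      simpa [Function.comp] using this)

/-- The Calkin algebra `L(H)/K(H)`. -/
abbrev Calkin := (compactIdeal H).ringCon.Quotient

/-- The quotient map `L(H) → L(H)/K(H)`. -/
noncomputable def calkinMk : (H →L[ℂ] H) →+* Calkin H := RingCon.mk' _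

lemma calkinMk_surjective : Function.Surjective (calkinMk H) := fun x =>
  Quotient.inductionOn' x fun y => ⟨y, rfl⟩

noncomputable instance : Algebra ℂ (Calkin H) :=
  RingHom.toAlgebra' ((calkinMk H).comp (algebraMap ℂ (H →L[ℂ] H))) (by
    intro c x
    obtain ⟨y, rfl⟩ := calkinMk_surjective H x
    rw [RingHom.comp_apply, ← map_mul, ← map_mul, Algebra.commutes])

/-- An element of the Calkin algebra is positive if it is self-adjoint (equivalently, has a
self-adjoint representative) and its spectrum is contained in `[0, ∞)`. -/
noncomputable def Calkin.IsPositive (x : Calkin H) : Prop :=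
  (∃ S : H →L[ℂ] H, IsSelfAdjoint S ∧ calkinMk H S = x) ∧
    spectrum ℂ x ⊆ {z : ℂ | 0 ≤ z.re ∧ z.im = 0}

variable {H}
set_option maxHeartbeats 1600000
set_option synthInstance.maxHeartbeats 400000

/-- Greedy construction of a sequence of vectors, where the `n`-th vector is chosen (via the
selection function `f`) relative to the span of the previously chosen vectors. -/
private noncomputable def orthoSeq (f : Submodule ℂ H → H) : ℕ → H
  | n => f (Submodule.span ℂ (Set.range fun m : Fin n => orthoSeq f m))
  termination_by n => n
  decreasing_by exact m.isLt

private lemma orthoSeq_eq (f : Submodule ℂ H → H) (n : ℕ) :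
    orthoSeq f n = f (Submodule.span ℂ (Set.range fun m : Fin n => orthoSeq f m)) := by
  rw [orthoSeq]

/-- The quotient map onto the Calkin algebra, as an algebra homomorphism. -/
private noncomputable def calkinAlgHom : (H →L[ℂ] H) →ₐ[ℂ] Calkin H :=
  { calkinMk H with commutes' := fun _ => rfl }

private lemma calkinAlgHom_apply (T : H →L[ℂ] H) : calkinAlgHom T = calkinMk H T := rfl

private lemma calkinMk_eq_zero (W : H →L[ℂ] H) (hW : IsCompactOperator ⇑W) :
    calkinMk H W = 0 := by
  have hmem : W ∈ compactIdeal H := by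
    rw [compactIdeal, TwoSidedIdeal.mem_mk']
    exact hW
  have h0 : (compactIdeal H).ringCon W 0 := by
    rw [TwoSidedIdeal.rel_iff]; simpa using hmem
  exact (RingCon.eq _).mpr h0

private lemma spectrum_calkinMk_subset (T : H →L[ℂ] H) :
    spectrum ℂ (calkinMk H T) ⊆ spectrum ℂ T := by
  have := AlgHom.spectrum_apply_subset (calkinAlgHom (H := H)) T
  simpa [calkinAlgHom_apply] using this

/-- An operator which is arbitrarily small off of finite-dimensional subspaces is compact. -/
private lemma isCompactOperator_of_small (W : H →L[ℂ] H)
    (hs : ∀ ε : ℝ, 0 < ε → ∃ F : Submodule ℂ H, FiniteDimensional ℂ F ∧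
      ∀ x ∈ Fᗮ, ‖W x‖ ≤ ε * ‖x‖) : IsCompactOperator ⇑W := by
  have hmem : W ∈ closure {f : H →L[ℂ] H | IsCompactOperator ⇑f} := by
    rw [Metric.mem_closure_iff]
    intro ε hε
    obtain ⟨F, hF, hWF⟩ := hs (ε / 2) (by positivity)
    haveI := hF
    haveI : ProperSpace F := FiniteDimensional.proper ℂ F
    set Q : H →L[ℂ] H := F.subtypeL ∘L (F.orthogonalProjectionOnto) with hQ
    have hQcompact : IsCompactOperator ⇑Q := by
      refine ⟨Subtype.val '' Metric.closedBall (0 : F) 1,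
        ((isCompact_closedBall _ _).image continuous_subtype_val), ?_⟩
      refine Filter.mem_of_superset (Metric.closedBall_mem_nhds (0 : H) one_pos) ?_
      intro x hx
      refine ⟨F.orthogonalProjectionOnto x, ?_, rfl⟩
      rw [Metric.mem_closedBall, dist_zero_right]
      calc ‖F.orthogonalProjectionOnto x‖ ≤ ‖(F.orthogonalProjectionOnto : H →L[ℂ] F)‖ * ‖x‖ :=
            (F.orthogonalProjectionOnto).le_opNorm x
        _ ≤ 1 * 1 := by
            refine mul_le_mul (Submodule.orthogonalProjectionOnto_norm_le (K := F)) ?_ (norm_nonneg _) zero_le_one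
            simpa [dist_zero_right] using hx
        _ = 1 := one_mul 1
    refine ⟨W ∘L Q, ?_, ?_⟩
    · show IsCompactOperator ⇑(W ∘L Q)
      rw [ContinuousLinearMap.coe_comp']
      exact hQcompact.continuous_comp W.continuous
    · rw [dist_eq_norm]
      have hb : ‖W - W ∘L Q‖ ≤ ε / 2 := by
        refine ContinuousLinearMap.opNorm_le_bound _ (by positivity) fun x => ?_
        have hsub : x - (F.orthogonalProjectionOnto x : H) ∈ Fᗮ :=
          Submodule.sub_starProjection_mem_orthogonal x
        have h1 : (W - W ∘L Q) x = W (x - (F.orthogonalProjectionOnto x : H)) := by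
          simp [hQ, map_sub]
        rw [h1]
        have h2 : ‖x - (F.orthogonalProjectionOnto x : H)‖ ≤ ‖x‖ := by
          rw [show x - (F.orthogonalProjectionOnto x : H) = (Fᗮ.orthogonalProjectionOnto x : H) from by
            rw [Submodule.orthogonalProjectionOnto_orthogonal]; rfl]
          calc ‖(Fᗮ.orthogonalProjectionOnto x : H)‖
              ≤ ‖(Fᗮ.orthogonalProjectionOnto : H →L[ℂ] Fᗮ)‖ * ‖x‖ :=
                (Fᗮ.orthogonalProjectionOnto).le_opNorm x
            _ ≤ 1 * ‖x‖ :=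
                mul_le_mul_of_nonneg_right (Submodule.orthogonalProjectionOnto_norm_le (K := Fᗮ)) (norm_nonneg x)
            _ = ‖x‖ := one_mul _
        calc ‖W (x - (F.orthogonalProjectionOnto x : H))‖
            ≤ (ε / 2) * ‖x - (F.orthogonalProjectionOnto x : H)‖ := hWF _ hsub
          _ ≤ (ε / 2) * ‖x‖ := mul_le_mul_of_nonneg_left h2 (by positivity)
      calc ‖W - W ∘L Q‖ ≤ ε / 2 := hb
        _ < ε := by linarith
  rw [isClosed_setOf_isCompactOperator.closure_eq] at hmem
  exact hmem

/-- If `T` is a bounded self-adjoint operator on a complex Hilbert space such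
that `liminf ⟨T xₙ, xₙ⟩ ≥ 0` for every sequence of unit vectors `(xₙ)` converging weakly to `0`,
then the essential spectrum of `T` (the spectrum of the coset `T + K(H)` in the Calkin algebra)
is contained in `[0, ∞)`. -/
theorem essSpectrum_subset_nonneg_of_liminf_inner_nonneg
    (T : H →L[ℂ] H) (hT : IsSelfAdjoint T)
    (h : ∀ x : ℕ → H, (∀ n, ‖x n‖ = 1) →
      (∀ y : H, Tendsto (fun n => (inner ℂ (x n) y : ℂ)) atTop (𝓝 0)) →
      0 ≤ Filter.liminf (fun n => (inner ℂ (T (x n)) (x n) : ℂ).re) atTop) :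
    spectrum ℂ (calkinMk H T) ⊆ {z : ℂ | 0 ≤ z.re ∧ z.im = 0} := by
  classical
  intro z hz
  have hzT : z ∈ spectrum ℂ T := spectrum_calkinMk_subset T hz
  have hzre : z = (z.re : ℂ) := hT.mem_spectrum_eq_re hzT
  have him : z.im = 0 := by
    conv_lhs => rw [hzre]
    exact Complex.ofReal_im _
  refine ⟨?_, him⟩
  by_contra hneg
  push_neg at hneg
  set μ : ℝ := z.re with hμdef
  have hμ0 : μ < 0 := hneg
  set a : ℝ := μ / 2 with ha
  have haμ : μ < a := by rw [ha]; linarith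
  have ha0 : a < 0 := by rw [ha]; linarith
  set g : ℝ → ℝ := fun t => (max t a - μ)⁻¹ with hgdef
  set w : ℝ → ℝ := fun t => (t - max t a) * g t with hwdef
  have hden : ∀ t : ℝ, max t a - μ ≠ 0 := fun t =>
    ne_of_gt (by have := le_max_right t a; linarith)
  have hgc : Continuous g := ((continuous_id.max continuous_const).sub continuous_const).inv₀ hden
  have hwc : Continuous w := (continuous_id.sub (continuous_id.max continuous_const)).mul hgc
  have hw0 : ∀ t : ℝ, a ≤ t → w t = 0 := fun t ht => by
    simp [hwdef, max_eq_left ht]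
  set W : H →L[ℂ] H := cfc w T with hWdef
  have hWsa : IsSelfAdjoint W := cfc_predicate w T
  have hWadj : ContinuousLinearMap.adjoint W = W := by
    rw [← ContinuousLinearMap.star_eq_adjoint]; exact hWsa.star_eq
  have hWinner : ∀ u v : H, (inner ℂ (W u) v : ℂ) = inner ℂ u (W v) := fun u v => by
    conv_lhs => rw [← hWadj]
    exact ContinuousLinearMap.adjoint_inner_left W v u
  have hfun : (fun t : ℝ => g t * (t - μ)) = fun t => 1 + w t := by
    funext t
    have hd := hden t
    simp only [hgdef, hwdef]
    field_simp
    ring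
  have hsubeq : T - algebraMap ℝ (H →L[ℂ] H) μ = cfc (fun t : ℝ => t - μ) T := by
    rw [cfc_sub (fun t : ℝ => t) (fun _ : ℝ => μ) T (by fun_prop) (by fun_prop),
      cfc_id' ℝ T, cfc_const μ T]
  have honeW : cfc (fun t : ℝ => 1 + w t) T = 1 + W := by
    rw [cfc_add (a := T) (fun _ : ℝ => 1) w (by fun_prop) (by fun_prop), cfc_const 1 T, map_one]
  have hmulST : cfc g T * (T - algebraMap ℝ (H →L[ℂ] H) μ) = 1 + W := by
    rw [hsubeq, ← cfc_mul g (fun t : ℝ => t - μ) T (by fun_prop) (by fun_prop), hfun, honeW]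
  have hmulTS : (T - algebraMap ℝ (H →L[ℂ] H) μ) * cfc g T = 1 + W := by
    rw [hsubeq, ← cfc_mul (fun t : ℝ => t - μ) g T (by fun_prop) (by fun_prop)]
    rw [show (fun t : ℝ => (t - μ) * g t) = fun t : ℝ => g t * (t - μ) from by
      funext t; ring, hfun, honeW]
  by_cases hWc : IsCompactOperator ⇑W
  · -- If `W` is compact, then `T - μ` is invertible modulo compacts, contradicting
    -- `z ∈ spectrum (calkinMk T)`.
    have hW0 : calkinMk H W = 0 := calkinMk_eq_zero W hWc
    have hunit : IsUnit (calkinMk H (T - algebraMap ℝ (H →L[ℂ] H) μ)) := by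
      refine ⟨⟨calkinMk H (T - algebraMap ℝ (H →L[ℂ] H) μ), calkinMk H (cfc g T), ?_, ?_⟩, rfl⟩
      · rw [← map_mul, hmulTS, map_add, map_one, hW0, add_zero]
      · rw [← map_mul, hmulST, map_add, map_one, hW0, add_zero]
    rw [spectrum.mem_iff] at hz
    apply hz
    have halgH : algebraMap ℂ (H →L[ℂ] H) z = algebraMap ℝ (H →L[ℂ] H) μ := by
      rw [IsScalarTower.algebraMap_apply ℝ ℂ (H →L[ℂ] H) μ]
      congr 1
    have hrepr : algebraMap ℂ (Calkin H) z - calkinMk H T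
        = - calkinMk H (T - algebraMap ℝ (H →L[ℂ] H) μ) := by
      have halg : algebraMap ℂ (Calkin H) z = calkinMk H (algebraMap ℂ (H →L[ℂ] H) z) := rfl
      rw [halg, halgH, ← map_sub, ← map_neg]
      congr 1
      abel
    rw [hrepr]
    exact hunit.neg
  · -- Otherwise, we construct an orthonormal sequence contradicting the hypothesis `h`.
    exfalso
    have key : ∃ ε : ℝ, 0 < ε ∧ ∀ F : Submodule ℂ H, FiniteDimensional ℂ F →
        ∃ x : H, ‖x‖ = 1 ∧ x ∈ Fᗮ ∧ ε ≤ ‖W x‖ := by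
      by_contra hcon
      push_neg at hcon
      refine hWc (isCompactOperator_of_small W fun ε hε => ?_)
      obtain ⟨F, hF, hsmall⟩ := hcon ε hε
      refine ⟨F, hF, fun x hx => ?_⟩
      rcases eq_or_ne x 0 with rfl | hx0
      · simp
      · have hnx : (0 : ℝ) < ‖x‖ := norm_pos_iff.mpr hx0
        set u : H := ((‖x‖ : ℂ))⁻¹ • x with hu
        have hun : ‖u‖ = 1 := by
          rw [hu, norm_smul, norm_inv, Complex.norm_real, Real.norm_eq_abs,
            abs_of_pos hnx, inv_mul_cancel₀ hnx.ne']
        have humem : u ∈ Fᗮ := Submodule.smul_mem _ _ hx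
        have := (hsmall u hun humem).le
        have hWu : W x = (‖x‖ : ℂ) • W u := by
          rw [hu, map_smul, smul_smul, mul_inv_cancel₀ (by exact_mod_cast hnx.ne'), one_smul]
        rw [hWu, norm_smul, Complex.norm_real, Real.norm_eq_abs, abs_of_pos hnx]
        calc ‖x‖ * ‖W u‖ ≤ ‖x‖ * ε := mul_le_mul_of_nonneg_left this hnx.le
          _ = ε * ‖x‖ := mul_comm _ _
    obtain ⟨ε, hε, key⟩ := key
    choose pick hp1 hp2 hp3 using key
    set f : Submodule ℂ H → H := fun F =>
      if hF : FiniteDimensional ℂ F then pick F hF else 0 with hfdef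
    set e : ℕ → H := orthoSeq f with he
    have hFn : ∀ n : ℕ, FiniteDimensional ℂ
        (Submodule.span ℂ (Set.range fun m : Fin n => e m)) := fun n =>
      FiniteDimensional.span_of_finite ℂ (Set.finite_range _)
    have heq : ∀ n, e n = pick (Submodule.span ℂ (Set.range fun m : Fin n => e m)) (hFn n) := by
      intro n
      have h1 : e n = f (Submodule.span ℂ (Set.range fun m : Fin n => e m)) := by
        rw [he]; exact orthoSeq_eq f n
      rw [h1, hfdef]
      exact dif_pos (hFn n)
    have hnorm : ∀ n, ‖e n‖ = 1 := fun n => by rw [heq n]; exact hp1 _ _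
    have hperp : ∀ n, e n ∈ (Submodule.span ℂ (Set.range fun m : Fin n => e m))ᗮ := fun n => by
      have := hp2 _ (hFn n)
      rwa [← heq n] at this
    have hWlow : ∀ n, ε ≤ ‖W (e n)‖ := fun n => by
      have := hp3 _ (hFn n)
      rwa [← heq n] at this
    have hlt : ∀ m n : ℕ, m < n → (inner ℂ (e m) (e n) : ℂ) = 0 := by
      intro m n hmn
      have hm : e m ∈ Submodule.span ℂ (Set.range fun k : Fin n => e k) :=
        Submodule.subset_span ⟨⟨m, hmn⟩, rfl⟩
      exact (Submodule.mem_orthogonal _ _).mp (hperp n) _ hm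
    have hortho : Orthonormal ℂ e := by
      refine ⟨hnorm, fun i j hij => ?_⟩
      rcases lt_or_gt_of_ne hij with hlt' | hlt'
      · exact hlt i j hlt'
      · exact inner_eq_zero_symm.mpr (hlt j i hlt')
    have hr : ∀ n, (0 : ℝ) < ‖W (e n)‖ := fun n => lt_of_lt_of_le hε (hWlow n)
    set x : ℕ → H := fun n => ((‖W (e n)‖ : ℂ))⁻¹ • W (e n) with hx
    have hxnorm : ∀ n, ‖x n‖ = 1 := fun n => by
      rw [hx, norm_smul, norm_inv, Complex.norm_real, Real.norm_eq_abs,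
        abs_of_pos (hr n), inv_mul_cancel₀ (hr n).ne']
    have hweak : ∀ y : H, Tendsto (fun n => (inner ℂ (x n) y : ℂ)) atTop (𝓝 0) := by
      intro y
      have hsum : Summable fun n => ‖(inner ℂ (e n) (W y) : ℂ)‖ ^ 2 :=
        hortho.inner_products_summable (W y)
      have h0 : Tendsto (fun n => ‖(inner ℂ (e n) (W y) : ℂ)‖ ^ 2) atTop (𝓝 0) :=
        hsum.tendsto_atTop_zero
      have h1 : Tendsto (fun n => ‖(inner ℂ (e n) (W y) : ℂ)‖) atTop (𝓝 0) := by
        have := h0.sqrt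
        simpa [Real.sqrt_sq (norm_nonneg _)] using this
      refine squeeze_zero_norm (fun n => ?_) (by simpa using h1.const_mul ε⁻¹)
      calc ‖(inner ℂ (x n) y : ℂ)‖
          = ‖((‖W (e n)‖ : ℂ))⁻¹‖ * ‖(inner ℂ (W (e n)) y : ℂ)‖ := by
            rw [hx]
            rw [inner_smul_left, norm_mul, RCLike.norm_conj]
        _ = ‖W (e n)‖⁻¹ * ‖(inner ℂ (e n) (W y) : ℂ)‖ := by
            rw [hWinner, norm_inv, Complex.norm_real, Real.norm_eq_abs, abs_of_pos (hr n)]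
        _ ≤ ε⁻¹ * ‖(inner ℂ (e n) (W y) : ℂ)‖ :=
            mul_le_mul_of_nonneg_right
              (inv_anti₀ hε (hWlow n)) (norm_nonneg _)
    -- positivity of (a - t) w(t)² and the resulting quantitative bound
    have hD : 0 ≤ cfc (fun t : ℝ => (a - t) * w t ^ 2) T := by
      refine cfc_nonneg fun t _ => ?_
      rcases le_or_gt t a with hta | hta
      · have h1 : 0 ≤ a - t := by linarith
        positivity
      · rw [hw0 t hta.le]; simp
    have hDeq : cfc (fun t : ℝ => (a - t) * w t ^ 2) T = a • (W * W) - T * (W * W) := by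
      have e1 : (fun t : ℝ => (a - t) * w t ^ 2)
          = fun t : ℝ => a * (w t * w t) - t * (w t * w t) := by
        funext t; ring
      rw [e1, cfc_sub (fun t : ℝ => a * (w t * w t)) (fun t : ℝ => t * (w t * w t)) T
          (by fun_prop) (by fun_prop),
        cfc_const_mul a (fun t : ℝ => w t * w t) T (by fun_prop),
        cfc_mul w w T (by fun_prop) (by fun_prop),
        cfc_mul (fun t : ℝ => t) (fun t : ℝ => w t * w t) T (by fun_prop) (by fun_prop),
        cfc_mul w w T (by fun_prop) (by fun_prop), cfc_id' ℝ T]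
    have hpos := (ContinuousLinearMap.nonneg_iff_isPositive _).mp (hDeq ▸ hD)
    have hcomm : T * W = W * T := by
      conv_lhs => rw [← cfc_id' ℝ T hT]
      conv_rhs => rw [← cfc_id' ℝ T hT]
      rw [← cfc_mul (fun t : ℝ => t) w T (by fun_prop) (by fun_prop),
        ← cfc_mul w (fun t : ℝ => t) T (by fun_prop) (by fun_prop)]
      congr 1
      funext t
      ring
    have hcomm' : ∀ u : H, T (W u) = W (T u) := fun u => by
      have := ContinuousLinearMap.ext_iff.mp hcomm u
      simpa [ContinuousLinearMap.mul_apply] using this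
    -- the key negativity bound on the quadratic form
    have hTv : ∀ n, (inner ℂ (T (W (e n))) (W (e n)) : ℂ).re ≤ a * ‖W (e n)‖ ^ 2 := by
      intro n
      have h3 := hpos.inner_nonneg_left (e n)
      have hterm : ((a • (W * W) - T * (W * W)) (e n)) =
          a • W (W (e n)) - T (W (W (e n))) := by
        simp [ContinuousLinearMap.mul_apply]
      rw [hterm] at h3
      have hsmul : (a • W (W (e n)) : H) = ((a : ℂ)) • W (W (e n)) :=
        RCLike.real_smul_eq_coe_smul (K := ℂ) a (W (W (e n)))
      rw [inner_sub_left, hsmul, inner_smul_left] at h3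
      have hinner1 : (inner ℂ (W (W (e n))) (e n) : ℂ) = inner ℂ (W (e n)) (W (e n)) :=
        hWinner (W (e n)) (e n)
      have hinner2 : (inner ℂ (T (W (W (e n)))) (e n) : ℂ)
          = inner ℂ (T (W (e n))) (W (e n)) := by
        rw [hcomm' (W (e n))]
        exact hWinner (T (W (e n))) (e n)
      rw [hinner1, hinner2, inner_self_eq_norm_sq_to_K] at h3
      have h3' : (0:ℝ) ≤ ((starRingEnd ℂ) (a : ℂ) * ((‖W (e n)‖ : ℂ)) ^ 2
          - inner ℂ (T (W (e n))) (W (e n))).re := (Complex.nonneg_iff.mp h3).1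
      have hre : ((starRingEnd ℂ) (a : ℂ) * ((‖W (e n)‖ : ℂ)) ^ 2).re
          = a * ‖W (e n)‖ ^ 2 := by
        rw [Complex.conj_ofReal]
        push_cast
        rw [← Complex.ofReal_pow, Complex.re_ofReal_mul, Complex.ofReal_re]
      rw [Complex.sub_re, hre] at h3'
      linarith
    have hTW : ∀ n, (inner ℂ (T (x n)) (x n) : ℂ).re ≤ a := by
      intro n
      set r : ℝ := ‖W (e n)‖ with hrdef
      have hr0 : (0 : ℝ) < r := hr n
      have hcalc : (inner ℂ (T (x n)) (x n) : ℂ)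
          = ((r : ℂ))⁻¹ * ((starRingEnd ℂ) ((r : ℂ))⁻¹ * inner ℂ (T (W (e n))) (W (e n))) := by
        rw [hx]
        rw [map_smul, inner_smul_left, inner_smul_right]
        ring
      have hconj : (starRingEnd ℂ) ((r : ℂ))⁻¹ = ((r : ℂ))⁻¹ := by
        rw [map_inv₀, Complex.conj_ofReal]
      rw [hcalc, hconj, ← mul_assoc, ← mul_inv, ← Complex.ofReal_mul, ← Complex.ofReal_inv]
      rw [Complex.re_ofReal_mul]
      have h4 := hTv n
      calc (r * r)⁻¹ * (inner ℂ (T (W (e n))) (W (e n)) : ℂ).re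
          ≤ (r * r)⁻¹ * (a * r ^ 2) := by
            refine mul_le_mul_of_nonneg_left ?_ (by positivity)
            simpa [hrdef] using h4
        _ = a := by
            have hrne : r ≠ 0 := hr0.ne'
            rw [sq, mul_comm a (r * r), ← mul_assoc,
              inv_mul_cancel₀ (mul_ne_zero hrne hrne), one_mul]
    have hlim := h x hxnorm hweak
    have hbound : IsBoundedUnder (· ≥ ·) atTop fun n => (inner ℂ (T (x n)) (x n) : ℂ).re := by
      refine isBoundedUnder_of ⟨-(‖T‖), fun n => ?_⟩
      have h1 : ‖(inner ℂ (T (x n)) (x n) : ℂ)‖ ≤ ‖T‖ := by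
        calc ‖(inner ℂ (T (x n)) (x n) : ℂ)‖ ≤ ‖T (x n)‖ * ‖x n‖ := norm_inner_le_norm _ _
          _ ≤ (‖T‖ * ‖x n‖) * ‖x n‖ :=
              mul_le_mul_of_nonneg_right (T.le_opNorm (x n)) (norm_nonneg _)
          _ = ‖T‖ := by rw [hxnorm n]; ring
      have h2 := Complex.abs_re_le_norm (inner ℂ (T (x n)) (x n) : ℂ)
      have := neg_abs_le ((inner ℂ (T (x n)) (x n) : ℂ).re)
      linarith
    have hub : liminf (fun n => (inner ℂ (T (x n)) (x n) : ℂ).re) atTop ≤ a :=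
      liminf_le_of_frequently_le (Frequently.of_forall hTW) hbound
    linarith
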